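/- Let M > 0, ε ∈ (0,1], ρ ∈ [0, M], N = ⌊ρ/ε⌋, and let f, Π : [0,M] → [0,1] be measurable with ∫₀^M f = ∫₀^M Π = ρ. Suppose ∫₀^M η_ε (f - Π) dv ≤ δ for the step function η_ε(v) = ⌊v/ε⌋ + 1, that Π is a minimizer of g ↦ ∫ η_ε g over [0,1]-valued g of mass ρ, and that Π ≥ f on [Nε, (N+1)ε] (with (N+1)ε ≤ M). Then ∫₀^M |f - Π| dv ≤ 3δ/ε. In particular, if a sequence f_n of such densities satisfies ∫ η_ε (f_n - Π_n) dv → 0, then ‖f_n - Π_n‖_{L¹([0,M])} → 0. -/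

import Mathlib

open MeasureTheory Set Filter
set_option maxHeartbeats 1000000

lemma bdd_intOn {φ : ℝ → ℝ} (hφ : Measurable φ) {C M : ℝ} (h : ∀ v ∈ Icc (0:ℝ) M, |φ v| ≤ C) :
    IntegrableOn φ (Icc 0 M) := by
  apply Integrable.mono' (integrable_const C) hφ.aestronglyMeasurable.restrict
  filter_upwards [ae_restrict_mem measurableSet_Icc] with v hv using h v hv

lemma split3 {φ : ℝ → ℝ} {a b M : ℝ} (h0a : 0 ≤ a) (hab : a ≤ b) (hbM : b ≤ M)
    (hint : IntegrableOn φ (Icc 0 M)) :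
    ∫ v in Icc (0:ℝ) M, φ v
      = (∫ v in Ico (0:ℝ) a, φ v) + (∫ v in Ico a b, φ v) + ∫ v in Icc b M, φ v := by
  have h0b : (0:ℝ) ≤ b := h0a.trans hab
  have hu1 : Ico (0:ℝ) a ∪ Ico a b = Ico 0 b := Ico_union_Ico_eq_Ico h0a hab
  have hu2 : Ico (0:ℝ) b ∪ Icc b M = Icc 0 M := Ico_union_Icc_eq_Icc h0b hbM
  have hiA : IntegrableOn φ (Ico 0 a) := hint.mono_set (fun x hx => ⟨hx.1, hx.2.le.trans (hab.trans hbM)⟩)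
  have hiC : IntegrableOn φ (Ico a b) := hint.mono_set (fun x hx => ⟨h0a.trans hx.1, hx.2.le.trans hbM⟩)
  have hiB : IntegrableOn φ (Icc b M) := hint.mono_set (fun x hx => ⟨h0b.trans hx.1, hx.2⟩)
  have hiAB : IntegrableOn φ (Ico 0 b) := hint.mono_set (fun x hx => ⟨hx.1, hx.2.le.trans hbM⟩)
  have d1 : Disjoint (Ico (0:ℝ) a) (Ico a b) := Set.Ico_disjoint_Ico_same
  have d2 : Disjoint (Ico (0:ℝ) b) (Icc b M) :=
    Set.disjoint_left.mpr fun x hx hx' => absurd hx.2 (not_lt.mpr hx'.1)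
  calc ∫ v in Icc (0:ℝ) M, φ v = ∫ v in Ico (0:ℝ) b ∪ Icc b M, φ v := by rw [hu2]
    _ = (∫ v in Ico (0:ℝ) b, φ v) + ∫ v in Icc b M, φ v :=
        setIntegral_union d2 measurableSet_Icc hiAB hiB
    _ = (∫ v in Ico (0:ℝ) a ∪ Ico a b, φ v) + ∫ v in Icc b M, φ v := by rw [hu1]
    _ = (∫ v in Ico (0:ℝ) a, φ v) + (∫ v in Ico a b, φ v) + ∫ v in Icc b M, φ v := by
        rw [setIntegral_union d1 measurableSet_Ico hiA hiC]

lemma key (M ε : ℝ) (hM : 0 < M) (hε : 0 < ε)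
    (ρ : ℝ) (hρ : ρ ∈ Icc 0 M)
    (N : ℕ) (hN : (N : ℤ) = ⌊ρ / ε⌋) (hNM : ((N : ℝ) + 1) * ε ≤ M)
    (η : ℝ → ℝ) (hη : ∀ v, η v = (⌊v / ε⌋ : ℝ) + 1)
    (f Pi : ℝ → ℝ) (hf : Measurable f) (hPi : Measurable Pi)
    (hf01 : ∀ v, f v ∈ Icc (0:ℝ) 1) (hPi01 : ∀ v, Pi v ∈ Icc (0:ℝ) 1)
    (hfρ : (∫ v in Icc (0:ℝ) M, f v) = ρ) (hPiρ : (∫ v in Icc (0:ℝ) M, Pi v) = ρ)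
    (hmin : ∀ g : ℝ → ℝ, Measurable g → (∀ v, g v ∈ Icc (0:ℝ) 1) →
        (∫ v in Icc (0:ℝ) M, g v) = ρ →
        (∫ v in Icc (0:ℝ) M, η v * Pi v) ≤ ∫ v in Icc (0:ℝ) M, η v * g v)
    (hmid : ∀ v ∈ Icc ((N:ℝ)*ε) (((N:ℝ)+1)*ε), f v ≤ Pi v) :
    0 ≤ (∫ v in Icc (0:ℝ) M, η v * (f v - Pi v)) ∧
    (∫ v in Icc (0:ℝ) M, |f v - Pi v|) ≤ 2 * ∫ v in Icc (0:ℝ) M, η v * (f v - Pi v) := by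
  set a : ℝ := (N:ℝ) * ε with ha_def
  set b : ℝ := ((N:ℝ) + 1) * ε with hb_def
  have h0a : 0 ≤ a := mul_nonneg (Nat.cast_nonneg N) hε.le
  have hab : a ≤ b := by nlinarith
  have hbM : b ≤ M := hNM
  have h0b : (0:ℝ) ≤ b := h0a.trans hab
  -- a ≤ ρ ≤ b
  have haρ : a ≤ ρ := by
    have h1 : ((⌊ρ/ε⌋ : ℤ) : ℝ) ≤ ρ / ε := Int.floor_le _
    rw [← hN] at h1; push_cast at h1
    calc a = (N:ℝ) * ε := rfl
      _ ≤ (ρ/ε) * ε := by nlinarith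
      _ = ρ := by field_simp
  have hρb : ρ ≤ b := by
    have h1 : ρ / ε < ((⌊ρ/ε⌋ : ℤ) : ℝ) + 1 := Int.lt_floor_add_one _
    rw [← hN] at h1; push_cast at h1
    have : ρ / ε * ε ≤ (((N:ℝ)) + 1) * ε := by nlinarith
    calc ρ = ρ / ε * ε := by field_simp
      _ ≤ b := this
  -- the constant value on the middle cell
  set c : ℝ := (ρ - a) / ε with hc_def
  have hc0 : 0 ≤ c := div_nonneg (by linarith) hε.le
  have hc1 : c ≤ 1 := by
    rw [hc_def, div_le_one hε]
    have : b = a + ε := by rw [ha_def, hb_def]; ring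
    linarith
  -- η facts
  have mη : Measurable η := by
    have : η = fun v => ((⌊v/ε⌋ : ℤ) : ℝ) + 1 := funext hη
    rw [this]
    exact (measurable_from_top.comp ((measurable_id.div_const ε).floor)).add measurable_const
  have hη1 : ∀ v ∈ Icc (0:ℝ) M, |η v| ≤ M/ε + 1 := by
    intro v hv
    have h1 : ((⌊v/ε⌋ : ℤ) : ℝ) ≤ v/ε := Int.floor_le _
    have h2 : (0:ℤ) ≤ ⌊v/ε⌋ := Int.floor_nonneg.mpr (div_nonneg hv.1 hε.le)
    have h2' : (0:ℝ) ≤ ((⌊v/ε⌋ : ℤ) : ℝ) := by exact_mod_cast h2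
    have h3 : v/ε ≤ M/ε := by gcongr; exact hv.2
    rw [hη v, abs_of_nonneg (by linarith)]; linarith
  have hηA : ∀ v ∈ Ico (0:ℝ) a, η v ≤ (N:ℝ) := by
    intro v hv
    have hlt : v/ε < (N:ℝ) := (div_lt_iff₀ hε).mpr hv.2
    have h1 : ⌊v/ε⌋ < (N:ℤ) := Int.floor_lt.mpr (by exact_mod_cast hlt)
    have h2 : ⌊v/ε⌋ + 1 ≤ (N:ℤ) := h1
    rw [hη v]; exact_mod_cast h2
  have hηC : ∀ v ∈ Ico a b, η v = (N:ℝ) + 1 := by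
    intro v hv
    have h1 : (N:ℝ) ≤ v/ε := (le_div_iff₀ hε).mpr (by linarith [hv.1])
    have h2 : v/ε < (N:ℝ) + 1 := (div_lt_iff₀ hε).mpr (by linarith [hv.2])
    have h3 : ⌊v/ε⌋ = (N:ℤ) := Int.floor_eq_iff.mpr ⟨by exact_mod_cast h1, by exact_mod_cast h2⟩
    rw [hη v, h3]; push_cast; ring
  have hηB : ∀ v ∈ Icc b M, (N:ℝ) + 2 ≤ η v := by
    intro v hv
    have h1 : (N:ℝ) + 1 ≤ v/ε := (le_div_iff₀ hε).mpr (by linarith [hv.1])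
    have h2 : ((N:ℤ) + 1) ≤ ⌊v/ε⌋ := Int.le_floor.mpr (by exact_mod_cast h1)
    have h2' : ((N:ℝ)) + 1 ≤ ((⌊v/ε⌋:ℤ):ℝ) := by exact_mod_cast h2
    rw [hη v]; linarith
  -- the explicit bathtub minimizer
  set Ps : ℝ → ℝ := fun v => if v < a then 1 else if v < b then c else 0 with hPs_def
  have mPs : Measurable Ps := by
    apply Measurable.ite (measurableSet_Iio (a := a)) measurable_const
    exact Measurable.ite (measurableSet_Iio (a := b)) measurable_const measurable_const
  have Ps01 : ∀ v, Ps v ∈ Icc (0:ℝ) 1 := by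
    intro v; simp only [hPs_def]
    split_ifs
    · exact ⟨zero_le_one, le_refl 1⟩
    · exact ⟨hc0, hc1⟩
    · exact ⟨le_refl 0, zero_le_one⟩
  have PsA : ∀ v ∈ Ico (0:ℝ) a, Ps v = 1 := fun v hv => if_pos hv.2
  have PsC : ∀ v ∈ Ico a b, Ps v = c := by
    intro v hv; simp only [hPs_def]
    rw [if_neg (not_lt.mpr hv.1), if_pos hv.2]
  have PsB : ∀ v ∈ Icc b M, Ps v = 0 := by
    intro v hv; simp only [hPs_def]
    rw [if_neg (not_lt.mpr (hab.trans hv.1)), if_neg (not_lt.mpr hv.1)]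
  have iPs : IntegrableOn Ps (Icc 0 M) := by
    apply bdd_intOn mPs (C := 1)
    intro v hv
    rcases Ps01 v with ⟨l, r⟩; rw [abs_le]; constructor <;> linarith
  -- mass of Ps
  have volA : ∫ v in Ico (0:ℝ) a, Ps v = a := by
    rw [setIntegral_congr_fun measurableSet_Ico PsA, setIntegral_const, measureReal_def, Real.volume_Ico,
      ENNReal.toReal_ofReal (by linarith), smul_eq_mul]; ring
  have volC : ∫ v in Ico a b, Ps v = ρ - a := by
    rw [setIntegral_congr_fun measurableSet_Ico PsC, setIntegral_const, measureReal_def, Real.volume_Ico,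
      ENNReal.toReal_ofReal (by linarith), smul_eq_mul]
    have hba : b - a = ε := by rw [ha_def, hb_def]; ring
    rw [hba, hc_def]; field_simp
  have volB : ∫ v in Icc b M, Ps v = 0 := by
    rw [setIntegral_congr_fun measurableSet_Icc PsB, integral_zero]
  have massPs : (∫ v in Icc (0:ℝ) M, Ps v) = ρ := by
    rw [split3 h0a hab hbM iPs, volA, volC, volB]; ring
  -- integrability helper for η * w
  have etaInt : ∀ (w : ℝ → ℝ), Measurable w → ∀ C : ℝ, (∀ v, |w v| ≤ C) →
      IntegrableOn (fun v => η v * w v) (Icc (0:ℝ) M) := by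
    intro w hw C hC
    apply bdd_intOn (mη.mul hw) (C := (M/ε + 1) * C)
    intro v hv
    rw [_root_.Pi.mul_apply, abs_mul]
    exact mul_le_mul (hη1 v hv) (hC v) (abs_nonneg _) ((abs_nonneg _).trans (hη1 v hv))
  have bd1 : ∀ (g : ℝ → ℝ), (∀ v, g v ∈ Icc (0:ℝ) 1) → ∀ v, |g v| ≤ 1 := by
    intro g hg v; rcases hg v with ⟨l, r⟩; rw [abs_le]; exact ⟨by linarith, r⟩
  -- key lower bound for any admissible g
  have lowbd : ∀ g : ℝ → ℝ, Measurable g → (∀ v, g v ∈ Icc (0:ℝ) 1) →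
      (∫ v in Icc (0:ℝ) M, g v) = ρ →
      (∫ v in Icc b M, g v) + (∫ v in Ico (0:ℝ) a, (1 - g v))
        ≤ (∫ v in Icc (0:ℝ) M, η v * g v) - (∫ v in Icc (0:ℝ) M, η v * Ps v) := by
    intro g hg hg01 hgρ
    set u : ℝ → ℝ := fun v => g v - Ps v with hu_def
    have hu1 : ∀ v, |u v| ≤ 1 := by
      intro v; rcases hg01 v with ⟨l1, r1⟩; rcases Ps01 v with ⟨l2, r2⟩
      simp only [hu_def]; rw [abs_le]; constructor <;> linarith
    have mu : Measurable u := hg.sub mPs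
    have iu : IntegrableOn u (Icc 0 M) := bdd_intOn mu (fun v _ => hu1 v)
    have iηu : IntegrableOn (fun v => η v * u v) (Icc 0 M) := etaInt u mu 1 hu1
    have ig : IntegrableOn g (Icc 0 M) := bdd_intOn hg (fun v _ => bd1 g hg01 v)
    have iηg : IntegrableOn (fun v => η v * g v) (Icc 0 M) := etaInt g hg 1 (bd1 g hg01)
    have iηPs : IntegrableOn (fun v => η v * Ps v) (Icc 0 M) := etaInt Ps mPs 1 (bd1 Ps Ps01)
    -- subset inclusions
    have subA : Ico (0:ℝ) a ⊆ Icc 0 M := fun x hx => ⟨hx.1, hx.2.le.trans (hab.trans hbM)⟩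
    have subC : Ico a b ⊆ Icc (0:ℝ) M := fun x hx => ⟨h0a.trans hx.1, hx.2.le.trans hbM⟩
    have subB : Icc b M ⊆ Icc (0:ℝ) M := fun x hx => ⟨h0b.trans hx.1, hx.2⟩
    -- total integral of u is 0
    have hu0 : (∫ v in Icc (0:ℝ) M, u v) = 0 := by
      simp only [hu_def]
      rw [integral_sub ig iPs, hgρ, massPs, sub_self]
    -- step 1 : E(g) - E(Ps) = ∫ η u
    have step1 : (∫ v in Icc (0:ℝ) M, η v * u v)
        = (∫ v in Icc (0:ℝ) M, η v * g v) - (∫ v in Icc (0:ℝ) M, η v * Ps v) := by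
      have : ∀ v, η v * u v = η v * g v - η v * Ps v := by intro v; simp only [hu_def]; ring
      rw [funext this] at *
      exact integral_sub iηg iηPs
    -- split ∫ η u and ∫ u
    have splitηu := split3 h0a hab hbM iηu
    have splitu := split3 h0a hab hbM iu
    -- A piece
    have stepA : (N:ℝ) * (∫ v in Ico (0:ℝ) a, u v) ≤ ∫ v in Ico (0:ℝ) a, η v * u v := by
      rw [← integral_const_mul]
      apply setIntegral_mono_on ((iu.mono_set subA).const_mul _) (iηu.mono_set subA)
        measurableSet_Ico
      intro v hv
      have hup : u v ≤ 0 := by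
        have := (hg01 v).2; have := PsA v hv; simp only [hu_def]; linarith
      exact mul_le_mul_of_nonpos_right (hηA v hv) hup
    -- C piece
    have stepC : (∫ v in Ico a b, η v * u v) = ((N:ℝ) + 1) * ∫ v in Ico a b, u v := by
      rw [← integral_const_mul]
      apply setIntegral_congr_fun measurableSet_Ico
      intro v hv
      show η v * u v = ((N:ℝ) + 1) * u v
      rw [hηC v hv]
    -- B piece
    have stepB : ((N:ℝ) + 2) * (∫ v in Icc b M, u v) ≤ ∫ v in Icc b M, η v * u v := by
      rw [← integral_const_mul]
      apply setIntegral_mono_on ((iu.mono_set subB).const_mul _) (iηu.mono_set subB)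
        measurableSet_Icc
      intro v hv
      have hup : 0 ≤ u v := by
        have := (hg01 v).1; have := PsB v hv; simp only [hu_def]; linarith
      exact mul_le_mul_of_nonneg_right (hηB v hv) hup
    -- identify ∫_B u and ∫_A u
    have huB : (∫ v in Icc b M, u v) = ∫ v in Icc b M, g v := by
      apply setIntegral_congr_fun measurableSet_Icc
      intro v hv; simp only [hu_def]; rw [PsB v hv]; ring
    have huA : (∫ v in Ico (0:ℝ) a, u v) = - ∫ v in Ico (0:ℝ) a, (1 - g v) := by
      rw [← integral_neg]
      apply setIntegral_congr_fun measurableSet_Ico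
      intro v hv; simp only [hu_def]; rw [PsA v hv]; ring
    -- combine
    set IA := ∫ v in Ico (0:ℝ) a, u v
    set IC := ∫ v in Ico a b, u v
    set IB := ∫ v in Icc b M, u v
    have hsum : IA + IC + IB = 0 := by rw [← splitu, hu0]
    have hring : (N:ℝ) * IA + ((N:ℝ) + 1) * IC + ((N:ℝ) + 2) * IB
        = ((N:ℝ) + 1) * (IA + IC + IB) + IB - IA := by ring
    have : IB - IA ≤ (∫ v in Icc (0:ℝ) M, η v * u v) := by
      rw [splitηu, stepC]
      have := stepA; have := stepB
      nlinarith [hsum]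
    rw [← step1, huB, huA] at *
    linarith [this]
  -- apply the lower bound to Pi and f
  have hPiPs : (∫ v in Icc (0:ℝ) M, η v * Pi v) ≤ ∫ v in Icc (0:ℝ) M, η v * Ps v :=
    hmin Ps mPs Ps01 massPs
  have lowPi := lowbd Pi hPi hPi01 hPiρ
  have nBPi : 0 ≤ ∫ v in Icc b M, Pi v :=
    setIntegral_nonneg measurableSet_Icc (fun v _ => (hPi01 v).1)
  have nAPi : 0 ≤ ∫ v in Ico (0:ℝ) a, (1 - Pi v) :=
    setIntegral_nonneg measurableSet_Ico (fun v _ => by linarith [(hPi01 v).2])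
  have hBPi : (∫ v in Icc b M, Pi v) = 0 := le_antisymm (by linarith) nBPi
  have hAPi : (∫ v in Ico (0:ℝ) a, (1 - Pi v)) = 0 := le_antisymm (by linarith) nAPi
  have hEPi : (∫ v in Icc (0:ℝ) M, η v * Pi v) = ∫ v in Icc (0:ℝ) M, η v * Ps v :=
    le_antisymm hPiPs (by linarith)
  have lowf := lowbd f hf hf01 hfρ
  have iηf := etaInt f hf 1 (bd1 f hf01)
  have iηPi := etaInt Pi hPi 1 (bd1 Pi hPi01)
  have hD : (∫ v in Icc (0:ℝ) M, η v * (f v - Pi v))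
      = (∫ v in Icc (0:ℝ) M, η v * f v) - ∫ v in Icc (0:ℝ) M, η v * Pi v := by
    have : ∀ v, η v * (f v - Pi v) = η v * f v - η v * Pi v := fun v => by ring
    rw [funext this]
    exact integral_sub iηf iηPi
  have nBf : 0 ≤ ∫ v in Icc b M, f v :=
    setIntegral_nonneg measurableSet_Icc (fun v _ => (hf01 v).1)
  have nAf : 0 ≤ ∫ v in Ico (0:ℝ) a, (1 - f v) :=
    setIntegral_nonneg measurableSet_Ico (fun v _ => by linarith [(hf01 v).2])
  have hDlow : (∫ v in Icc b M, f v) + (∫ v in Ico (0:ℝ) a, (1 - f v))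
      ≤ ∫ v in Icc (0:ℝ) M, η v * (f v - Pi v) := by rw [hD, hEPi]; exact lowf
  refine ⟨by linarith, ?_⟩
  -- L¹ estimate
  have subA : Ico (0:ℝ) a ⊆ Icc 0 M := fun x hx => ⟨hx.1, hx.2.le.trans (hab.trans hbM)⟩
  have subC : Ico a b ⊆ Icc (0:ℝ) M := fun x hx => ⟨h0a.trans hx.1, hx.2.le.trans hbM⟩
  have subB : Icc b M ⊆ Icc (0:ℝ) M := fun x hx => ⟨h0b.trans hx.1, hx.2⟩
  have i_f : IntegrableOn f (Icc 0 M) := bdd_intOn hf (fun v _ => bd1 f hf01 v)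
  have i_Pi : IntegrableOn Pi (Icc 0 M) := bdd_intOn hPi (fun v _ => bd1 Pi hPi01 v)
  have i1f : IntegrableOn (fun v => 1 - f v) (Icc (0:ℝ) M) := by
    apply bdd_intOn (measurable_const.sub hf) (C := 1)
    intro v _; rcases hf01 v with ⟨l, r⟩; show |1 - f v| ≤ 1; rw [abs_le]; constructor <;> linarith
  have i1Pi : IntegrableOn (fun v => 1 - Pi v) (Icc (0:ℝ) M) := by
    apply bdd_intOn (measurable_const.sub hPi) (C := 1)
    intro v _; rcases hPi01 v with ⟨l, r⟩; show |1 - Pi v| ≤ 1; rw [abs_le]; constructor <;> linarith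
  have iabs : IntegrableOn (fun v => |f v - Pi v|) (Icc (0:ℝ) M) := by
    apply bdd_intOn (hf.sub hPi).abs (C := 1)
    intro v _
    rw [abs_abs]; show |f v - Pi v| ≤ 1; rw [abs_le]
    rcases hf01 v with ⟨l1, r1⟩; rcases hPi01 v with ⟨l2, r2⟩
    constructor <;> linarith
  have splitS := split3 h0a hab hbM iabs
  have splitf := split3 h0a hab hbM i_f
  have splitPi := split3 h0a hab hbM i_Pi
  -- A piece
  have SA : (∫ v in Ico (0:ℝ) a, |f v - Pi v|)
      ≤ (∫ v in Ico (0:ℝ) a, (1 - f v)) + ∫ v in Ico (0:ℝ) a, (1 - Pi v) := by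
    rw [← integral_add (i1f.mono_set subA) (i1Pi.mono_set subA)]
    apply setIntegral_mono_on (iabs.mono_set subA)
      ((i1f.mono_set subA).add (i1Pi.mono_set subA)) measurableSet_Ico
    intro v _
    show |f v - Pi v| ≤ (1 - f v) + (1 - Pi v)
    rcases hf01 v with ⟨l1, r1⟩; rcases hPi01 v with ⟨l2, r2⟩
    rw [abs_le]; constructor <;> linarith
  -- B piece
  have SB : (∫ v in Icc b M, |f v - Pi v|)
      ≤ (∫ v in Icc b M, f v) + ∫ v in Icc b M, Pi v := by
    rw [← integral_add (i_f.mono_set subB) (i_Pi.mono_set subB)]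
    apply setIntegral_mono_on (iabs.mono_set subB)
      ((i_f.mono_set subB).add (i_Pi.mono_set subB)) measurableSet_Icc
    intro v _
    show |f v - Pi v| ≤ f v + Pi v
    rcases hf01 v with ⟨l1, r1⟩; rcases hPi01 v with ⟨l2, r2⟩
    rw [abs_le]; constructor <;> linarith
  -- C piece
  have SC : (∫ v in Ico a b, |f v - Pi v|)
      = (∫ v in Ico a b, Pi v) - ∫ v in Ico a b, f v := by
    rw [← integral_sub (i_Pi.mono_set subC) (i_f.mono_set subC)]
    apply setIntegral_congr_fun measurableSet_Ico
    intro v hv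
    show |f v - Pi v| = Pi v - f v
    rw [abs_of_nonpos (by linarith [hmid v ⟨hv.1, hv.2.le⟩])]; ring
  -- relate ∫_A f - ∫_A Pi to the (1 - ·) integrals
  have hAfPi : (∫ v in Ico (0:ℝ) a, f v) - ∫ v in Ico (0:ℝ) a, Pi v
      = (∫ v in Ico (0:ℝ) a, (1 - Pi v)) - ∫ v in Ico (0:ℝ) a, (1 - f v) := by
    rw [← integral_sub (i_f.mono_set subA) (i_Pi.mono_set subA),
      ← integral_sub (i1Pi.mono_set subA) (i1f.mono_set subA)]
    apply setIntegral_congr_fun measurableSet_Ico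
    intro v _
    show f v - Pi v = (1 - Pi v) - (1 - f v)
    ring
  rw [splitS, SC]
  rw [hfρ] at splitf; rw [hPiρ] at splitPi
  linarith [hDlow, nAf, nBf, hAPi, hBPi]

theorem stmt_19 (M ε : ℝ) (hM : 0 < M) (hε : 0 < ε) (hε1 : ε ≤ 1)
    (ρ : ℝ) (hρ : ρ ∈ Icc 0 M)
    (N : ℕ) (hN : (N : ℤ) = ⌊ρ / ε⌋) (hNM : ((N : ℝ) + 1) * ε ≤ M)
    (η : ℝ → ℝ) (hη : ∀ v, η v = (⌊v / ε⌋ : ℝ) + 1) :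
    (∀ (f Pi : ℝ → ℝ) (δ : ℝ), Measurable f → Measurable Pi →
      (∀ v, f v ∈ Icc (0 : ℝ) 1) → (∀ v, Pi v ∈ Icc (0 : ℝ) 1) →
      (∫ v in Icc (0 : ℝ) M, f v) = ρ → (∫ v in Icc (0 : ℝ) M, Pi v) = ρ →
      (∫ v in Icc (0 : ℝ) M, η v * (f v - Pi v)) ≤ δ →
      (∀ g : ℝ → ℝ, Measurable g → (∀ v, g v ∈ Icc (0 : ℝ) 1) →
        (∫ v in Icc (0 : ℝ) M, g v) = ρ →
        (∫ v in Icc (0 : ℝ) M, η v * Pi v) ≤ ∫ v in Icc (0 : ℝ) M, η v * g v) →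
      (∀ v ∈ Icc ((N : ℝ) * ε) (((N : ℝ) + 1) * ε), f v ≤ Pi v) →
      (∫ v in Icc (0 : ℝ) M, |f v - Pi v|) ≤ 3 * δ / ε) ∧
    (∀ (F P : ℕ → ℝ → ℝ), (∀ n, Measurable (F n)) → (∀ n, Measurable (P n)) →
      (∀ n v, F n v ∈ Icc (0 : ℝ) 1) → (∀ n v, P n v ∈ Icc (0 : ℝ) 1) →
      (∀ n, (∫ v in Icc (0 : ℝ) M, F n v) = ρ) →
      (∀ n, (∫ v in Icc (0 : ℝ) M, P n v) = ρ) →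
      (∀ n, ∀ g : ℝ → ℝ, Measurable g → (∀ v, g v ∈ Icc (0 : ℝ) 1) →
        (∫ v in Icc (0 : ℝ) M, g v) = ρ →
        (∫ v in Icc (0 : ℝ) M, η v * P n v) ≤ ∫ v in Icc (0 : ℝ) M, η v * g v) →
      (∀ n, ∀ v ∈ Icc ((N : ℝ) * ε) (((N : ℝ) + 1) * ε), F n v ≤ P n v) →
      Tendsto (fun n => ∫ v in Icc (0 : ℝ) M, η v * (F n v - P n v)) atTop (nhds 0) →
      Tendsto (fun n => ∫ v in Icc (0 : ℝ) M, |F n v - P n v|) atTop (nhds 0)) := by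
  constructor
  · intro f Pi δ hf hPi hf01 hPi01 hfρ hPiρ hδ hmin hmid
    obtain ⟨hD0, hL1⟩ := key M ε hM hε ρ hρ N hN hNM η hη f Pi hf hPi hf01 hPi01 hfρ hPiρ hmin hmid
    have hδ0 : 0 ≤ δ := hD0.trans hδ
    have h3 : 3 * δ ≤ 3 * δ / ε := by
      rw [le_div_iff₀ hε]; nlinarith
    linarith
  · intro F P hF hP hF01 hP01 hFρ hPρ hmin hmid hT
    apply squeeze_zero
      (g := fun n => 2 * ∫ v in Icc (0 : ℝ) M, η v * (F n v - P n v))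
    · intro n
      exact setIntegral_nonneg measurableSet_Icc (fun v _ => abs_nonneg _)
    · intro n
      exact (key M ε hM hε ρ hρ N hN hNM η hη (F n) (P n) (hF n) (hP n) (hF01 n) (hP01 n)
        (hFρ n) (hPρ n) (hmin n) (hmid n)).2
    · simpa using hT.const_mul 2
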